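/- If G is a δ-regular digraph (δ ≥ 2) with N vertices and diameter D which is not a directed cycle, then its line digraph L(G) is δ-regular, has δ·N vertices, and has diameter D + 1. -/
import Mathlib


/-- A directed walk of length `l` from `u` to `v` in the digraph with arc relation `Adj`. -/
def DWalk {V : Type*} (Adj : V → V → Prop) (u v : V) (l : ℕ) : Prop :=
  ∃ f : ℕ → V, f 0 = u ∧ f l = v ∧ ∀ i < l, Adj (f i) (f (i + 1))

/-- The digraph with arc relation `Adj` has diameter exactly `D`: every ordered pair of
vertices is joined by a directed walk of length at most `D`, and some pair is at
distance exactly `D`. -/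
def HasDiam {V : Type*} (Adj : V → V → Prop) (D : ℕ) : Prop :=
  (∀ u v : V, ∃ l ≤ D, DWalk Adj u v l) ∧ ∃ u v : V, ∀ l, DWalk Adj u v l → D ≤ l

lemma dwalk_cons {V : Type*} {Adj : V → V → Prop} {u w v : V} {l : ℕ}
    (h : Adj u w) (hw : DWalk Adj w v l) : DWalk Adj u v (l + 1) := by
  obtain ⟨g, hg0, hgl, hadj⟩ := hw
  refine ⟨fun i => if i = 0 then u else g (i - 1), by simp, by simp [hgl], ?_⟩
  intro i hi
  cases i with
  | zero => simpa [hg0] using h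
  | succ n => simpa using hadj n (by omega)

lemma lift_walk {V : Type*} {Adj : V → V → Prop} {v : V} {l : ℕ} :
    ∀ {u : V}, DWalk Adj u v l → ∀ e f : {p : V × V // Adj p.1 p.2},
    e.val.2 = u → f.val.1 = v →
    DWalk (fun e f : {p : V × V // Adj p.1 p.2} => e.val.2 = f.val.1) e f (l + 1) := by
  induction l with
  | zero =>
    intro u hw e f he hf
    obtain ⟨g, hg0, hgl, _⟩ := hw
    refine ⟨fun i => if i = 0 then e else f, by simp, by simp, ?_⟩
    have huv : u = v := hg0 ▸ hgl
    intro i hi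
    interval_cases i
    simp [he, hf, huv]
  | succ n ih =>
    intro u hw e f he hf
    obtain ⟨g, hg0, hgl, hadj⟩ := hw
    have h1 : Adj u (g 1) := hg0 ▸ hadj 0 (by omega)
    have hw' : DWalk Adj (g 1) v n :=
      ⟨fun i => g (i + 1), rfl, hgl, fun i hi => hadj (i + 1) (by omega)⟩
    exact dwalk_cons (show e.val.2 = (⟨(u, g 1), h1⟩ : {p : V × V // Adj p.1 p.2}).val.1 from he)
      (ih hw' ⟨(u, g 1), h1⟩ f rfl hf)

lemma proj_walk {V : Type*} {Adj : V → V → Prop} (e f : {p : V × V // Adj p.1 p.2}) {m : ℕ}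
    (hw : DWalk (fun e f : {p : V × V // Adj p.1 p.2} => e.val.2 = f.val.1) e f (m + 1)) :
    DWalk Adj e.val.2 f.val.1 m := by
  obtain ⟨F, hF0, hFl, hadj⟩ := hw
  refine ⟨fun i => (F (i + 1)).val.1, ?_, ?_, ?_⟩
  · show (F (0 + 1)).val.1 = e.val.2
    exact Eq.trans (hadj 0 (by omega)).symm (congrArg (fun x => x.val.2) hF0)
  · show (F (m + 1)).val.1 = f.val.1
    rw [hFl]
  · intro i hi
    have h2 := hadj (i + 1) (by omega)
    simpa [← h2] using (F (i + 1)).prop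

theorem stmt_12 {V : Type*} [Fintype V] [DecidableEq V]
    (Adj : V → V → Prop) [DecidableRel Adj] (δ N D : ℕ) (hδ : 2 ≤ δ)
    (hN : Fintype.card V = N)
    (hreg : ∀ v : V, (Finset.univ.filter fun w => Adj v w).card = δ ∧
      (Finset.univ.filter fun w => Adj w v).card = δ)
    (hdiam : HasDiam Adj D)
    (hnotcycle : ¬ ∃ e : V ≃ ZMod (Fintype.card V),
      ∀ u v : V, Adj u v ↔ (e v : ZMod (Fintype.card V)) = e u + 1) :
    (∀ e : {p : V × V // Adj p.1 p.2},
      (Finset.univ.filter fun f : {p : V × V // Adj p.1 p.2} => e.val.2 = f.val.1).card = δ ∧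
      (Finset.univ.filter fun f : {p : V × V // Adj p.1 p.2} => f.val.2 = e.val.1).card = δ) ∧
    Fintype.card {p : V × V // Adj p.1 p.2} = δ * N ∧
    HasDiam (fun e f : {p : V × V // Adj p.1 p.2} => e.val.2 = f.val.1) (D + 1) := by
  refine ⟨?_, ?_, ?_, ?_⟩
  · -- regularity
    intro e
    constructor
    · rw [← (hreg e.val.2).1]
      apply Finset.card_bij (fun f _ => f.val.2)
      · intro f hf
        simp only [Finset.mem_filter, Finset.mem_univ, true_and] at hf ⊢
        rw [hf]; exact f.prop
      · intro f hf f' hf' hff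
        simp only [Finset.mem_filter, Finset.mem_univ, true_and] at hf hf'
        exact Subtype.ext (Prod.ext (hf' ▸ hf.symm) hff)
      · intro w hw
        simp only [Finset.mem_filter, Finset.mem_univ, true_and] at hw
        exact ⟨⟨(e.val.2, w), hw⟩, by simp, rfl⟩
    · rw [← (hreg e.val.1).2]
      apply Finset.card_bij (fun f _ => f.val.1)
      · intro f hf
        simp only [Finset.mem_filter, Finset.mem_univ, true_and] at hf ⊢
        rw [← hf]; exact f.prop
      · intro f hf f' hf' hff
        simp only [Finset.mem_filter, Finset.mem_univ, true_and] at hf hf'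
        exact Subtype.ext (Prod.ext hff (hf' ▸ hf))
      · intro w hw
        simp only [Finset.mem_filter, Finset.mem_univ, true_and] at hw
        exact ⟨⟨(w, e.val.1), hw⟩, by simp, rfl⟩
  · -- card
    rw [Fintype.card_congr (Equiv.subtypeProdEquivSigmaSubtype (fun a b : V => Adj a b)),
      Fintype.card_sigma]
    have h : ∀ u : V, Fintype.card {w // Adj u w} = δ := fun u => by
      rw [Fintype.card_subtype]; exact (hreg u).1
    simp only [h, Finset.sum_const, smul_eq_mul, Finset.card_univ, hN, mul_comm]
  · -- diameter upper bound
    intro e f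
    obtain ⟨l, hl, hw⟩ := hdiam.1 e.val.2 f.val.1
    exact ⟨l + 1, by omega, lift_walk hw e f rfl rfl⟩
  · -- diameter lower bound
    obtain ⟨u, v, huv⟩ := hdiam.2
    obtain ⟨a, ha, hane⟩ := Finset.exists_mem_ne
      (by rw [(hreg u).2]; omega) v
    have hAau : Adj a u := by simpa using ha
    obtain ⟨b, hb⟩ := Finset.card_pos.mp (by rw [(hreg v).1]; omega : 0 < (Finset.univ.filter fun w => Adj v w).card)
    have hAvb : Adj v b := by simpa using hb
    refine ⟨⟨(a, u), hAau⟩, ⟨(v, b), hAvb⟩, ?_⟩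
    intro m hm
    match m, hm with
    | 0, ⟨F, hF0, hFl, _⟩ =>
      exact absurd (congrArg (fun e => e.val.1) (hF0.symm.trans hFl)) hane
    | k + 1, hm =>
      have := proj_walk _ _ hm
      have := huv k this
      omega
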